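/- arXiv:1906.07465 — 4 statements merged into one kernel-verified Lean document; each statement's English description precedes it below -/
import Mathlib

section
/- Let (u, p) be a steady Euler flow on an open set of ℝ³ with u·∇p = 0, and let ω = Ω∘p for a C¹ function Ω : ℝ → ℝ, and let P satisfy ∇P = ω²∇p. Then ũ = ω·u and P also satisfy the steady Euler equation (ũ·∇)ũ = −∇P. -/
noncomputable section

/-- ℝ³ as functions `Fin 3 → ℝ`. -/
abbrev V3 : Type := Fin 3 → ℝ

/-- Partial derivative `∂ᵢ f` at `x`. -/
def pd (i : Fin 3) (f : V3 → ℝ) (x : V3) : ℝ := fderiv ℝ f x (Pi.single i 1)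

/-- Gradient. -/
def grad3 (f : V3 → ℝ) (x : V3) : V3 := fun i => pd i f x

/-- Divergence. -/
def div3 (u : V3 → V3) (x : V3) : ℝ := ∑ i, pd i (fun y => u y i) x

/-- Curl. -/
def curl3 (u : V3 → V3) (x : V3) : V3 :=
  ![pd 1 (fun y => u y 2) x - pd 2 (fun y => u y 1) x,
    pd 2 (fun y => u y 0) x - pd 0 (fun y => u y 2) x,
    pd 0 (fun y => u y 1) x - pd 1 (fun y => u y 0) x]

/-- Cross product on ℝ³. -/
def cross3 (a b : V3) : V3 :=
  ![a 1 * b 2 - a 2 * b 1, a 2 * b 0 - a 0 * b 2, a 0 * b 1 - a 1 * b 0]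

/-- Convective derivative `(u·∇)v`. -/
def conv3 (u v : V3 → V3) (x : V3) : V3 :=
  fun i => ∑ j, u x j * pd j (fun y => v y i) x

/-- Squared norm `|u|²` of a vector field. -/
def nsq (u : V3 → V3) (x : V3) : ℝ := ∑ i, u x i ^ 2

/-- Directional derivative `u·∇f`. -/
def dirDeriv (u : V3 → V3) (f : V3 → ℝ) (x : V3) : ℝ := ∑ i, u x i * pd i f x

/-- Modification of a localizable steady Euler flow: if `u·∇p = 0`, `ω = Ω∘p`
and `∇P = ω²∇p`, then `(ωu, P)` is again a steady Euler flow. -/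
theorem euler_modification (U : Set V3) (hU : IsOpen U)
    (u : V3 → V3) (p : V3 → ℝ)
    (hu : ContDiffOn ℝ 1 u U) (hp : ContDiffOn ℝ 1 p U)
    (euler : ∀ x ∈ U, conv3 u u x = -grad3 p x)
    (hloc : ∀ x ∈ U, dirDeriv u p x = 0)
    (Ω : ℝ → ℝ) (hΩ : ContDiff ℝ 1 Ω)
    (ω : V3 → ℝ) (hω : ∀ x, ω x = Ω (p x))
    (P : V3 → ℝ) (hP : ContDiffOn ℝ 1 P U)
    (hgradP : ∀ x ∈ U, grad3 P x = (ω x)^2 • grad3 p x) :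
    ∀ x ∈ U, conv3 (fun y => ω y • u y) (fun y => ω y • u y) x = -grad3 P x := by

  intro x hx
  have hxn : U ∈ nhds x := hU.mem_nhds hx
  have hdu : DifferentiableAt ℝ u x :=
    (hu.contDiffAt hxn).differentiableAt one_ne_zero
  have hdui : ∀ i, DifferentiableAt ℝ (fun y => u y i) x :=
    differentiableAt_pi.mp hdu
  have hdp : DifferentiableAt ℝ p x :=
    (hp.contDiffAt hxn).differentiableAt one_ne_zero
  have hωfun : ω = fun y => Ω (p y) := funext hω
  have hdω : DifferentiableAt ℝ ω x := by
    rw [hωfun]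
    exact (hΩ.differentiable one_ne_zero (p x)).comp x hdp
  set c := deriv Ω (p x) with hc
  have hpdω : ∀ j : Fin 3, pd j ω x = c * pd j p x := by
    intro j
    have : fderiv ℝ ω x = (fderiv ℝ Ω (p x)).comp (fderiv ℝ p x) := by
      rw [hωfun]
      exact fderiv_comp x (hΩ.differentiable one_ne_zero (p x)) hdp
    rw [pd, this]
    simp only [ContinuousLinearMap.comp_apply]
    have hv : ∀ v : ℝ, fderiv ℝ Ω (p x) v = v * deriv Ω (p x) := by
      intro v
      have := (fderiv ℝ Ω (p x)).map_smul v (1 : ℝ)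
      simp only [smul_eq_mul, mul_one] at this
      rw [this, fderiv_apply_one_eq_deriv]
    rw [hv, pd, mul_comm]
  have hprod : ∀ i j : Fin 3,
      pd j (fun y => ω y * u y i) x = ω x * pd j (fun y => u y i) x + u x i * (c * pd j p x) := by
    intro i j
    rw [← hpdω j, pd, fderiv_fun_mul hdω (hdui i)]
    simp [pd]
  have hsum0 : ∑ j, u x j * pd j p x = 0 := hloc x hx
  have heul : ∀ i : Fin 3, ∑ j, u x j * pd j (fun y => u y i) x = -(pd i p x) := by
    intro i
    have := congrFun (euler x hx) i
    simpa [conv3, grad3, Pi.neg_apply] using this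
  funext i
  have hPi : pd i P x = (ω x)^2 * pd i p x := by
    have := congrFun (hgradP x hx) i
    simpa [grad3, Pi.smul_apply, smul_eq_mul] using this
  show (∑ j, (ω x • u x) j * pd j (fun y => (ω y • u y) i) x) = -(pd i P x)
  simp only [Pi.smul_apply, smul_eq_mul]
  calc ∑ j, ω x * u x j * pd j (fun y => ω y * u y i) x
      = ∑ j, ((ω x * ω x) * (u x j * pd j (fun y => u y i) x)
          + (ω x * u x i * c) * (u x j * pd j p x)) := by
        refine Finset.sum_congr rfl fun j _ => ?_
        rw [hprod i j]; ring
    _ = (ω x * ω x) * (∑ j, u x j * pd j (fun y => u y i) x)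
          + (ω x * u x i * c) * (∑ j, u x j * pd j p x) := by
        rw [Finset.sum_add_distrib, Finset.mul_sum, Finset.mul_sum]
    _ = -(pd i P x) := by rw [heul i, hsum0, hPi]; ring
end
end

section
/- If ξ is a Killing vector field on ℝ³ (i.e. ∂ᵢξⱼ + ∂ⱼξᵢ = 0) which is nowhere zero, then the field a = ξ/|ξ|² satisfies div a = 0 and a × curl a = 0, i.e. a is a Beltrami flow. -/
noncomputable section

lemma pd_mul (i : Fin 3) (f g : V3 → ℝ) (x : V3) (hf : DifferentiableAt ℝ f x)
    (hg : DifferentiableAt ℝ g x) :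
    pd i (fun y => f y * g y) x = pd i f x * g x + f x * pd i g x := by
  simp only [pd, fderiv_fun_mul hf hg, ContinuousLinearMap.add_apply,
    ContinuousLinearMap.smul_apply, smul_eq_mul]
  ring

lemma pd_add (i : Fin 3) (f g : V3 → ℝ) (x : V3) (hf : DifferentiableAt ℝ f x)
    (hg : DifferentiableAt ℝ g x) :
    pd i (fun y => f y + g y) x = pd i f x + pd i g x := by
  simp only [pd, fderiv_fun_add hf hg, ContinuousLinearMap.add_apply]

lemma pd_inv (i : Fin 3) (f : V3 → ℝ) (x : V3) (hf : DifferentiableAt ℝ f x)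
    (h0 : f x ≠ 0) :
    pd i (fun y => (f y)⁻¹) x = -((f x) ^ 2)⁻¹ * pd i f x := by
  have h : HasFDerivAt (fun y => (f y)⁻¹) ((-((f x) ^ 2)⁻¹) • fderiv ℝ f x) x :=
    (hasDerivAt_inv h0).comp_hasFDerivAt x hf.hasFDerivAt
  simp [pd, h.fderiv, smul_eq_mul]

/-- For a nowhere-zero Killing field `ξ` on ℝ³, the field `a = ξ/|ξ|²`
is a Beltrami flow: `div a = 0` and `a × curl a = 0`. -/
theorem beltrami_of_killing (ξ : V3 → V3) (hξ : ContDiff ℝ 2 ξ)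
    (hkill : ∀ x (i j : Fin 3),
      pd i (fun y => ξ y j) x + pd j (fun y => ξ y i) x = 0)
    (hne : ∀ x, ξ x ≠ 0)
    (a : V3 → V3) (ha : ∀ x, a x = (nsq ξ x)⁻¹ • ξ x) (x : V3) :
    div3 a x = 0 ∧ cross3 (a x) (curl3 a x) = 0 := by
  -- differentiability of components
  have hdc : ∀ j : Fin 3, Differentiable ℝ (fun y => ξ y j) := by
    intro j
    exact fun y =>
      ((ContinuousLinearMap.proj j : V3 →L[ℝ] ℝ).differentiableAt).comp y
        ((hξ.differentiable (by norm_num)) y)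
  -- the squared norm as explicit sum
  have hnsq : ∀ y, nsq ξ y = ξ y 0 * ξ y 0 + (ξ y 1 * ξ y 1 + ξ y 2 * ξ y 2) := by
    intro y; simp [nsq, Fin.sum_univ_three]; ring
  have hdn : Differentiable ℝ (fun y => nsq ξ y) := by
    have : (fun y => nsq ξ y) =
        fun y => ξ y 0 * ξ y 0 + (ξ y 1 * ξ y 1 + ξ y 2 * ξ y 2) := funext hnsq
    rw [this]
    exact ((hdc 0).mul (hdc 0)).add (((hdc 1).mul (hdc 1)).add ((hdc 2).mul (hdc 2)))
  -- positivity of nsq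
  have hs0 : nsq ξ x ≠ 0 := by
    obtain ⟨i, hi⟩ := Function.ne_iff.mp (hne x)
    have h1 : (ξ x i) ^ 2 ≤ nsq ξ x := by
      apply Finset.single_le_sum (f := fun j => (ξ x j) ^ 2)
      · intro j _; positivity
      · simp
    have h2 : 0 < (ξ x i) ^ 2 := (sq_nonneg _).lt_of_ne' (pow_ne_zero 2 hi)
    exact ne_of_gt (lt_of_lt_of_le h2 h1)
  set s : ℝ := nsq ξ x with hs
  set g : Fin 3 → ℝ := fun i => ξ x i with hg
  set d : Fin 3 → Fin 3 → ℝ := fun i j => pd i (fun y => ξ y j) x with hd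
  -- derivative of nsq
  have hpdn : ∀ i : Fin 3, pd i (fun y => nsq ξ y) x =
      2 * (g 0 * d i 0 + g 1 * d i 1 + g 2 * d i 2) := by
    intro i
    have : (fun y => nsq ξ y) =
        fun y => ξ y 0 * ξ y 0 + (ξ y 1 * ξ y 1 + ξ y 2 * ξ y 2) := funext hnsq
    rw [this, pd_add i (fun y => ξ y 0 * ξ y 0) (fun y => ξ y 1 * ξ y 1 + ξ y 2 * ξ y 2) x (((hdc 0).mul (hdc 0)) x)
        ((((hdc 1).mul (hdc 1)).add ((hdc 2).mul (hdc 2))) x),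
      pd_add i (fun y => ξ y 1 * ξ y 1) (fun y => ξ y 2 * ξ y 2) x (((hdc 1).mul (hdc 1)) x) (((hdc 2).mul (hdc 2)) x),
      pd_mul i _ _ x ((hdc 0) x) ((hdc 0) x),
      pd_mul i _ _ x ((hdc 1) x) ((hdc 1) x),
      pd_mul i _ _ x ((hdc 2) x) ((hdc 2) x)]
    ring
  -- derivative of a components
  have hac : ∀ j : Fin 3, (fun y => a y j) = fun y => (nsq ξ y)⁻¹ * ξ y j := by
    intro j; funext y; rw [ha y]; simp [smul_eq_mul]
  have hpda : ∀ i j : Fin 3, pd i (fun y => a y j) x =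
      -(s ^ 2)⁻¹ * (2 * (g 0 * d i 0 + g 1 * d i 1 + g 2 * d i 2)) * g j
        + s⁻¹ * d i j := by
    intro i j
    rw [hac j, pd_mul i (fun y => (nsq ξ y)⁻¹) (fun y => ξ y j) x ((hdn x).inv hs0) ((hdc j) x),
      pd_inv i _ x (hdn x) hs0, hpdn i]
  -- antisymmetry
  have hanti : ∀ i j : Fin 3, d i j = -d j i := by
    intro i j
    have := hkill x j i
    simp only [hd]; linarith
  have h00 : d 0 0 = 0 := by have := hanti 0 0; linarith
  have h11 : d 1 1 = 0 := by have := hanti 1 1; linarith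
  have h22 : d 2 2 = 0 := by have := hanti 2 2; linarith
  have h10 : d 1 0 = -d 0 1 := hanti 1 0
  have h20 : d 2 0 = -d 0 2 := hanti 2 0
  have h21 : d 2 1 = -d 1 2 := hanti 2 1
  have hsval : s = g 0 ^ 2 + g 1 ^ 2 + g 2 ^ 2 := by
    simp [hs, nsq, Fin.sum_univ_three, hg]
  have haxv : ∀ i : Fin 3, a x i = s⁻¹ * g i := by
    intro i; rw [ha x]; simp [smul_eq_mul, hg, hs]
  constructor
  · simp only [div3, Fin.sum_univ_three, hpda, h00, h11, h22, h10, h20, h21]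
    field_simp
    rw [hsval]; ring
  · funext i
    fin_cases i <;>
    · simp only [cross3, curl3, Matrix.cons_val_zero, Matrix.cons_val_one,
        Matrix.head_cons, Matrix.cons_val_two, Matrix.tail_cons, hpda, haxv,
        h00, h11, h22, h10, h20, h21, Pi.zero_apply, Fin.zero_eta, Fin.mk_one, Fin.reduceFinMk]
      field_simp
      rw [hsval]; ring
end
end

section
/- The helically symmetric vector field u defined in cylindrical coordinates by u = (1/x)(∂t/∂y) e_ρ + (x²+k²)⁻¹(kh − x ∂t/∂x) e_z + (x²+k²)⁻¹(xh + k ∂t/∂x) e_φ, where x = ρ, y = z − kφ, and h = h(t), is divergence-free. -/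
noncomputable section

/-- ℝ² as functions `Fin 2 → ℝ`. -/
abbrev V2 : Type := Fin 2 → ℝ

/-- Partial derivative on ℝ². -/
def pd2 (i : Fin 2) (f : V2 → ℝ) (x : V2) : ℝ := fderiv ℝ f x (Pi.single i 1)

/-- The helically symmetric field with cylindrical components
`u_ρ = (1/x) t_y`, `u_z = (x²+k²)⁻¹(kh − x t_x)`, `u_φ = (x²+k²)⁻¹(xh + k t_x)`,
where `x = ρ`, `y = z − kφ`, is divergence-free:
`∂ρ u_ρ + u_ρ/ρ + ρ⁻¹ ∂φ u_φ + ∂z u_z = 0`.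
Coordinates on `V3`: `p 0 = ρ`, `p 1 = φ`, `p 2 = z`. -/
theorem helical_div_free (k : ℝ) (hk : 0 < k)
    (t : V2 → ℝ) (ht : ContDiff ℝ 2 t) (h : ℝ → ℝ) (hh : ContDiff ℝ 1 h)
    (uρ uφ uz : V3 → ℝ)
    (huρ : ∀ p : V3, uρ p = (1 / p 0) * pd2 1 t ![p 0, p 2 - k * p 1])
    (huz : ∀ p : V3, uz p = ((p 0)^2 + k^2)⁻¹ *
      (k * h (t ![p 0, p 2 - k * p 1]) - p 0 * pd2 0 t ![p 0, p 2 - k * p 1]))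
    (huφ : ∀ p : V3, uφ p = ((p 0)^2 + k^2)⁻¹ *
      (p 0 * h (t ![p 0, p 2 - k * p 1]) + k * pd2 0 t ![p 0, p 2 - k * p 1])) :
    ∀ p : V3, 0 < p 0 →
      pd 0 uρ p + uρ p / p 0 + (p 0)⁻¹ * pd 1 uφ p + pd 2 uz p = 0 := by
  classical
  intro p hp
  let L : V3 →L[ℝ] V2 := ContinuousLinearMap.pi
    ![ContinuousLinearMap.proj 0, ContinuousLinearMap.proj 2 - k • ContinuousLinearMap.proj 1]
  let proj0 : V3 →L[ℝ] ℝ := ContinuousLinearMap.proj 0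
  have hL : ∀ r : V3, L r = ![r 0, r 2 - k * r 1] := by
    intro r; funext j; fin_cases j <;> simp [L, ContinuousLinearMap.pi_apply]
  have hL0 : L (Pi.single 0 1) = (Pi.single 0 1 : V2) := by
    funext j; fin_cases j <;> simp [L, Pi.single_apply]
  have hL1 : L (Pi.single 1 1) = (-k) • (Pi.single 1 1 : V2) := by
    funext j; fin_cases j <;> simp [L, Pi.single_apply]
  have hL2 : L (Pi.single 2 1) = (Pi.single 1 1 : V2) := by
    funext j; fin_cases j <;> simp [L, Pi.single_apply]
  have hdt : ∀ z, HasFDerivAt t (fderiv ℝ t z) z := fun z =>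
    ((ht.differentiable (by norm_num)) z).hasFDerivAt
  have hft : ContDiff ℝ 1 (fderiv ℝ t) := ht.fderiv_right (by norm_num)
  have hB : HasFDerivAt (fderiv ℝ t) (fderiv ℝ (fderiv ℝ t) (L p)) (L p) :=
    ((hft.differentiable (by norm_num)) (L p)).hasFDerivAt
  have hT : HasFDerivAt (fun r : V3 => t (L r)) ((fderiv ℝ t (L p)).comp L) p :=
    (hdt (L p)).comp p L.hasFDerivAt
  have hH : HasFDerivAt (fun r : V3 => h (t (L r)))
      (deriv h (t (L p)) • ((fderiv ℝ t (L p)).comp L)) p :=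
    ((hh.differentiable (by norm_num)) (t (L p))).hasDerivAt.comp_hasFDerivAt p hT
  have hTx : HasFDerivAt (fun r : V3 => pd2 0 t (L r))
      (((ContinuousLinearMap.apply ℝ ℝ (Pi.single 0 1)).comp
        (fderiv ℝ (fderiv ℝ t) (L p))).comp L) p := by
    simp only [pd2]
    exact (((ContinuousLinearMap.apply ℝ ℝ (Pi.single (0:Fin 2) (1:ℝ))).hasFDerivAt.comp
      (L p) hB).comp p L.hasFDerivAt)
  have hTy : HasFDerivAt (fun r : V3 => pd2 1 t (L r))
      (((ContinuousLinearMap.apply ℝ ℝ (Pi.single 1 1)).comp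
        (fderiv ℝ (fderiv ℝ t) (L p))).comp L) p := by
    simp only [pd2]
    exact (((ContinuousLinearMap.apply ℝ ℝ (Pi.single (1:Fin 2) (1:ℝ))).hasFDerivAt.comp
      (L p) hB).comp p L.hasFDerivAt)
  have hX : p 0 ≠ 0 := ne_of_gt hp
  have hCk : (p 0)^2 + k^2 ≠ 0 := by positivity
  have hproj : HasFDerivAt (fun r : V3 => r 0) proj0 p := proj0.hasFDerivAt
  have hinv : HasFDerivAt (fun r : V3 => (r 0)⁻¹) ((-((p 0)^2)⁻¹) • proj0) p :=
    (hasDerivAt_inv hX).comp_hasFDerivAt p proj0.hasFDerivAt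
  have hden : HasFDerivAt (fun r : V3 => ((r 0)^2 + k^2)⁻¹)
      ((-((2:ℕ) * (p 0)^(2-1)) / ((p 0)^2 + k^2)^2) • proj0) p :=
    (show HasDerivAt (fun x : ℝ => (x^2 + k^2)⁻¹) ((-((2:ℕ) * (p 0)^(2-1)) / ((p 0)^2 + k^2)^2)) (p 0) from
      ((hasDerivAt_pow 2 (p 0)).add_const (k^2)).inv hCk).comp_hasFDerivAt (f := fun r : V3 => r 0) p proj0.hasFDerivAt
  -- abbreviations for values
  set a0 := fderiv ℝ t (L p) (Pi.single 0 1) with ha0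
  set a1 := fderiv ℝ t (L p) (Pi.single 1 1) with ha1
  set b01 := fderiv ℝ (fderiv ℝ t) (L p) (Pi.single 0 1) (Pi.single 1 1) with hb01
  set b10 := fderiv ℝ (fderiv ℝ t) (L p) (Pi.single 1 1) (Pi.single 0 1) with hb10
  set Hv := h (t (L p)) with hHv
  set H' := deriv h (t (L p)) with hH'
  -- ∂ρ uρ
  have E1 : pd 0 uρ p = (p 0)⁻¹ * b01 + a1 * (-((p 0)^2)⁻¹) := by
    have hfun : uρ = fun r : V3 => (r 0)⁻¹ * pd2 1 t (L r) := by
      funext r; rw [huρ r, hL r, one_div]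
    rw [hfun, pd, (show HasFDerivAt (fun r : V3 => (r 0)⁻¹ * pd2 1 t (L r)) _ p from hinv.mul hTy).fderiv]
    simp [hL0, pd2, ha1, hb01, proj0, ContinuousLinearMap.proj_apply, Pi.single_apply]
    try ring
  -- uρ/ρ
  have E2 : uρ p / p 0 = ((p 0)⁻¹ * a1) / p 0 := by
    rw [huρ p, ← hL p, one_div, pd2, ha1]
  -- ∂φ uφ
  have E3 : pd 1 uφ p = ((p 0)^2 + k^2)⁻¹ * (p 0 * (H' * (-k * a1)) + k * (-k * b10)) := by
    have hfun : uφ = fun r : V3 =>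
        ((r 0)^2 + k^2)⁻¹ * (r 0 * h (t (L r)) + k * pd2 0 t (L r)) := by
      funext r; rw [huφ r, hL r]
    rw [hfun, pd, (show HasFDerivAt (fun r : V3 => ((r 0)^2 + k^2)⁻¹ * (r 0 * h (t (L r)) + k * pd2 0 t (L r))) _ p from
      hden.mul ((hproj.mul hH).add (hTx.const_mul k))).fderiv]
    simp [hL1, pd2, ha1, hb10, proj0, ContinuousLinearMap.proj_apply, Pi.single_apply]
    ring
  -- ∂z uz
  have E4 : pd 2 uz p = ((p 0)^2 + k^2)⁻¹ * (k * (H' * a1) - (p 0 * b10 + a0 * 0)) := by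
    have hfun : uz = fun r : V3 =>
        ((r 0)^2 + k^2)⁻¹ * (k * h (t (L r)) - r 0 * pd2 0 t (L r)) := by
      funext r; rw [huz r, hL r]
    rw [hfun, pd, (show HasFDerivAt (fun r : V3 => ((r 0)^2 + k^2)⁻¹ * (k * h (t (L r)) - r 0 * pd2 0 t (L r))) _ p from
      hden.mul ((hH.const_mul k).sub (hproj.mul hTx))).fderiv]
    simp [hL2, pd2, ha1, ha0, hb10, proj0, ContinuousLinearMap.proj_apply, Pi.single_apply]
    try ring
  have hs : b01 = b10 := second_derivative_symmetric hdt hB _ _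
  rw [E1, E2, E3, E4, hs]
  field_simp
  ring
end
end

section
/- In the degenerate case k = 0, the system dh²/dt = c + 36t²/(h²−3tc), dc/dt = 6t/(h²−3tc) implies, after eliminating h², the second-order ODE 6t c'' + 3t (c')³ − 2c (c')² − 6c' = 0. -/
/-- In the degenerate case `k = 0`, eliminating `h²` from the system
`(h²)' = c + 36t²/(h²−3tc)`, `c' = 6t/(h²−3tc)` yields
`6t c'' + 3t (c')³ − 2c (c')² − 6c' = 0`. -/
theorem degenerate_second_order_ode (I : Set ℝ) (hI : IsOpen I)
    (h c : ℝ → ℝ) (hh : ContDiffOn ℝ 2 h I) (hc : ContDiffOn ℝ 2 c I)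
    (hden : ∀ t ∈ I, h t ^ 2 - 3 * t * c t ≠ 0)
    (hc' : ∀ t ∈ I, deriv c t ≠ 0)
    (heq1 : ∀ t ∈ I, deriv (fun s => h s ^ 2) t
      = c t + 36 * t^2 / (h t ^ 2 - 3 * t * c t))
    (heq2 : ∀ t ∈ I, deriv c t = 6 * t / (h t ^ 2 - 3 * t * c t)) :
    ∀ t ∈ I, 6 * t * deriv (deriv c) t + 3 * t * (deriv c t)^3
      - 2 * c t * (deriv c t)^2 - 6 * deriv c t = 0 := by
  intro t ht
  have hmem : I ∈ nhds t := hI.mem_nhds ht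
  have hdc : DifferentiableAt ℝ c t :=
    (hc.contDiffAt hmem).differentiableAt (by norm_num)
  have hdh : DifferentiableAt ℝ h t :=
    (hh.contDiffAt hmem).differentiableAt (by norm_num)
  set D : ℝ → ℝ := fun s => h s ^ 2 - 3 * s * c s with hDdef
  have hDt : D t ≠ 0 := hden t ht
  have hsq : HasDerivAt (fun s => h s ^ 2) (deriv (fun s => h s ^ 2) t) t :=
    (hdh.pow 2).hasDerivAt
  have h3s : HasDerivAt (fun s : ℝ => 3 * s) 3 t := by
    simpa using (hasDerivAt_id t).const_mul (3 : ℝ)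
  have h2 : HasDerivAt (fun s => 3 * s * c s)
      (3 * c t + 3 * t * deriv c t) t := by
    have := h3s.mul hdc.hasDerivAt
    exact this
  have hDder : HasDerivAt D
      (deriv (fun s => h s ^ 2) t - (3 * c t + 3 * t * deriv c t)) t :=
    hsq.sub h2
  have h6s : HasDerivAt (fun s : ℝ => 6 * s) 6 t := by
    simpa using (hasDerivAt_id t).const_mul (6 : ℝ)
  have hquot : HasDerivAt (fun s => 6 * s / D s)
      ((6 * D t - 6 * t * (deriv (fun s => h s ^ 2) t
        - (3 * c t + 3 * t * deriv c t))) / D t ^ 2) t :=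
    h6s.div hDder hDt
  have heqev : deriv c =ᶠ[nhds t] fun s => 6 * s / D s := by
    filter_upwards [hmem] with s hs
    exact heq2 s hs
  have hdd : deriv (deriv c) t
      = (6 * D t - 6 * t * (deriv (fun s => h s ^ 2) t
        - (3 * c t + 3 * t * deriv c t))) / D t ^ 2 := by
    rw [heqev.deriv_eq]
    exact hquot.deriv
  have e1 := heq1 t ht
  have e2 := heq2 t ht
  have hDt' : h t ^ 2 - 3 * t * c t ≠ 0 := hden t ht
  rw [hdd, e2, e1]
  simp only [hDdef]
  have hDt'' : h t ^ 2 - t * 3 * c t ≠ 0 := by rwa [mul_comm t 3]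
  field_simp
  ring
end
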